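/- arXiv:1810.02815 — 4 statements merged into one kernel-verified Lean document; each statement's English description precedes it below -/
import Mathlib

section
/- Dual Bounding Theorem, part (1): let F : ℝ^n → ℝ be differentiable with L-Lipschitz continuous gradient, let μ > 0, b₀, r̲, r̄, q̲, q, q̄ ∈ ℝ^n, A ∈ ℝ^{m×n} with nonzero j-th row a_j, and λ̲, λ, λ̄ ∈ ℝ^m. Assume the first-order conditions μ(q̲ − r̲) + ∇F(r̲) + b₀ + Aᵀλ̲ = 0, ∇F(q) + b₀ + Aᵀλ = 0, and L(q̄ − r̄) + ∇F(r̄) + b₀ + Aᵀλ̄ = 0 hold, that λ̲_l = λ_l = λ̄_l = 0 for every l ≠ j, and that λ_j ≥ 0. Set η = 1/‖a_j‖², H₁ = √η (μ‖q̲‖ + L‖q‖ + (μ + L)‖r̲‖) and H₃ = √η L (‖q̄‖ + ‖q‖ + 2‖r̄‖). Then |λ̲_j − λ_j| ≤ H₁ and |λ̄_j − λ_j| ≤ H₃; consequently max{λ̲_j − H₁, λ̄_j − H₃, 0} ≤ λ_j ≤ min{λ̲_j + H₁, λ̄_j + H₃}. -/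
open scoped RealInnerProductSpace

/-- `Aᵀ λ = ∑ l, λ_l a_l` where `a_l` is the `l`-th row of `A`, as a Euclidean vector. -/
noncomputable def transMul {m n : ℕ} (A : Matrix (Fin m) (Fin n) ℝ) (lam : Fin m → ℝ) :
    EuclideanSpace ℝ (Fin n) :=
  WithLp.toLp 2 (fun i => ∑ l, lam l * A l i)

/-- The `j`-th row of `A` regarded as a Euclidean vector. -/
noncomputable def rowVec {m n : ℕ} (A : Matrix (Fin m) (Fin n) ℝ) (j : Fin m) :
    EuclideanSpace ℝ (Fin n) :=
  WithLp.toLp 2 (fun i => A j i)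

/-- Dual Bounding Theorem, part (1): with the stationarity conditions of the lower model,
original, and upper model problems at `(q̲, λ̲)`, `(q, λ)`, `(q̄, λ̄)`, all multiplier
components other than the `j`-th vanishing, `λ_j ≥ 0`, and `η = 1/‖a_j‖²`, setting
`H₁ = √η (μ‖q̲‖ + L‖q‖ + (μ+L)‖r̲‖)` and `H₃ = √η L (‖q̄‖ + ‖q‖ + 2‖r̄‖)`, one has
`|λ̲_j − λ_j| ≤ H₁`, `|λ̄_j − λ_j| ≤ H₃`, and hence
`max{λ̲_j − H₁, λ̄_j − H₃, 0} ≤ λ_j ≤ min{λ̲_j + H₁, λ̄_j + H₃}`. -/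
theorem dual_bounding_part_one
    (n m : ℕ) (F : EuclideanSpace ℝ (Fin n) → ℝ) (L μ : ℝ) (hL : 0 < L) (hμ : 0 < μ)
    (hF : Differentiable ℝ F)
    (hlip : ∀ x y : EuclideanSpace ℝ (Fin n),
      ‖gradient F x - gradient F y‖ ≤ L * ‖x - y‖)
    (b0 rlow rup qlow q qup : EuclideanSpace ℝ (Fin n))
    (A : Matrix (Fin m) (Fin n) ℝ) (j : Fin m) (haj : rowVec A j ≠ 0)
    (lamlow lam lamup : Fin m → ℝ)
    (hstatlow : μ • (qlow - rlow) + gradient F rlow + b0 + transMul A lamlow = 0)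
    (hstat : gradient F q + b0 + transMul A lam = 0)
    (hstatup : L • (qup - rup) + gradient F rup + b0 + transMul A lamup = 0)
    (hcs : ∀ l, l ≠ j → lamlow l = 0 ∧ lam l = 0 ∧ lamup l = 0)
    (hlamj : 0 ≤ lam j)
    (η H1 H3 : ℝ)
    (hη : η = 1 / ‖rowVec A j‖ ^ 2)
    (hH1 : H1 = Real.sqrt η * (μ * ‖qlow‖ + L * ‖q‖ + (μ + L) * ‖rlow‖))
    (hH3 : H3 = Real.sqrt η * (L * (‖qup‖ + ‖q‖ + 2 * ‖rup‖))) :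
    |lamlow j - lam j| ≤ H1 ∧ |lamup j - lam j| ≤ H3 ∧
      max (max (lamlow j - H1) (lamup j - H3)) 0 ≤ lam j ∧
      lam j ≤ min (lamlow j + H1) (lamup j + H3) := by
  have hA : (0:ℝ) < ‖rowVec A j‖ := norm_pos_iff.mpr haj
  have hsq : Real.sqrt η = 1 / ‖rowVec A j‖ := by
    have h2 : (1 / ‖rowVec A j‖) ^ 2 = η := by rw [hη]; ring
    rw [← h2, Real.sqrt_sq (by positivity)]
  have key : ∀ lam' : Fin m → ℝ, (∀ l, l ≠ j → lam' l = 0) →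
      transMul A lam' = lam' j • rowVec A j := by
    intro lam' h
    ext i
    simp only [transMul, rowVec, PiLp.smul_apply, PiLp.toLp_apply, smul_eq_mul]
    exact Finset.sum_eq_single j (fun l _ hl => by rw [h l hl, zero_mul]) (by simp)
  rw [key lamlow (fun l hl => (hcs l hl).1)] at hstatlow
  rw [key lam (fun l hl => (hcs l hl).2.1)] at hstat
  rw [key lamup (fun l hl => (hcs l hl).2.2)] at hstatup
  have e1 : (lamlow j - lam j) • rowVec A j
      = (gradient F q - gradient F rlow) - μ • (qlow - rlow) := by
    have h := sub_eq_zero.mpr (hstatlow.trans hstat.symm)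
    rw [sub_smul]
    linear_combination (norm := module) h
  have e3 : (lamup j - lam j) • rowVec A j
      = (gradient F q - gradient F rup) - L • (qup - rup) := by
    have h := sub_eq_zero.mpr (hstatup.trans hstat.symm)
    rw [sub_smul]
    linear_combination (norm := module) h
  have b1 : |lamlow j - lam j| * ‖rowVec A j‖
      ≤ μ * ‖qlow‖ + L * ‖q‖ + (μ + L) * ‖rlow‖ := by
    have := congrArg norm e1
    rw [norm_smul, Real.norm_eq_abs] at this
    rw [this]
    calc ‖(gradient F q - gradient F rlow) - μ • (qlow - rlow)‖
        ≤ ‖gradient F q - gradient F rlow‖ + ‖μ • (qlow - rlow)‖ := norm_sub_le _ _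
      _ ≤ L * ‖q - rlow‖ + μ * ‖qlow - rlow‖ := by
          rw [norm_smul, Real.norm_eq_abs, abs_of_pos hμ]
          exact add_le_add (hlip q rlow) le_rfl
      _ ≤ L * (‖q‖ + ‖rlow‖) + μ * (‖qlow‖ + ‖rlow‖) := by
          have h1 := norm_sub_le q rlow
          have h2 := norm_sub_le qlow rlow
          nlinarith
      _ = μ * ‖qlow‖ + L * ‖q‖ + (μ + L) * ‖rlow‖ := by ring
  have b3 : |lamup j - lam j| * ‖rowVec A j‖
      ≤ L * (‖qup‖ + ‖q‖ + 2 * ‖rup‖) := by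
    have := congrArg norm e3
    rw [norm_smul, Real.norm_eq_abs] at this
    rw [this]
    calc ‖(gradient F q - gradient F rup) - L • (qup - rup)‖
        ≤ ‖gradient F q - gradient F rup‖ + ‖L • (qup - rup)‖ := norm_sub_le _ _
      _ ≤ L * ‖q - rup‖ + L * ‖qup - rup‖ := by
          rw [norm_smul, Real.norm_eq_abs, abs_of_pos hL]
          exact add_le_add (hlip q rup) le_rfl
      _ ≤ L * (‖q‖ + ‖rup‖) + L * (‖qup‖ + ‖rup‖) := by
          have h1 := norm_sub_le q rup
          have h2 := norm_sub_le qup rup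
          nlinarith
      _ = L * (‖qup‖ + ‖q‖ + 2 * ‖rup‖) := by ring
  have c1 : |lamlow j - lam j| ≤ H1 := by
    rw [hH1, hsq]
    rw [div_mul_eq_mul_div, one_mul, le_div_iff₀ hA] at *
    linarith [b1]
  have c3 : |lamup j - lam j| ≤ H3 := by
    rw [hH3, hsq]
    rw [div_mul_eq_mul_div, one_mul, le_div_iff₀ hA]
    linarith [b3]
  refine ⟨c1, c3, ?_, ?_⟩
  · rw [abs_sub_le_iff] at c1 c3
    simp only [max_le_iff, sub_le_iff_le_add]
    exact ⟨⟨by linarith [c1.1], by linarith [c3.1]⟩, hlamj⟩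
  · rw [abs_sub_le_iff] at c1 c3
    exact le_min (by linarith [c1.2]) (by linarith [c3.2])
end

section
/- Dual Bounding Theorem, part (2): under the hypotheses of part (1) (first-order conditions of the lower model, original, and upper model problems at (q̲, λ̲), (q, λ), (q̄, λ̄) with F differentiable with L-Lipschitz continuous gradient, μ > 0, nonzero j-th row a_j, λ̲_l = λ_l = λ̄_l = 0 for l ≠ j, λ_j ≥ 0, η = 1/‖a_j‖²), assume in addition that the three problems share the same primal solution: q̲ = q = q̄. Then |λ̲_j − λ_j| ≤ H₁ and |λ̄_j − λ_j| ≤ H₃ with H₁ = √η (L + μ)(‖q‖ + ‖r̲‖) and H₃ = 2√η L (‖q‖ + ‖r̄‖); consequently max{λ̲_j − H₁, λ̄_j − H₃, 0} ≤ λ_j ≤ min{λ̲_j + H₁, λ̄_j + H₃}. -/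
open scoped RealInnerProductSpace

lemma transMul_single {m n : ℕ} (A : Matrix (Fin m) (Fin n) ℝ) (lam : Fin m → ℝ)
    (j : Fin m) (h : ∀ l, l ≠ j → lam l = 0) :
    transMul A lam = lam j • rowVec A j := by
  ext i
  show ∑ l, lam l * A l i = (lam j • rowVec A j) i
  rw [PiLp.smul_apply]
  rw [Finset.sum_eq_single j]
  · rfl
  · intro l _ hl; rw [h l hl, zero_mul]
  · intro h'; simp at h'

/-- Dual Bounding Theorem, part (2): under the hypotheses of part (1), if moreover the
lower model, original, and upper model problems share the same primal solution
(`q̲ = q = q̄`), then `|λ̲_j − λ_j| ≤ H₁` and `|λ̄_j − λ_j| ≤ H₃` with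
`H₁ = √η (L + μ)(‖q‖ + ‖r̲‖)` and `H₃ = 2√η L (‖q‖ + ‖r̄‖)`, and consequently
`max{λ̲_j − H₁, λ̄_j − H₃, 0} ≤ λ_j ≤ min{λ̲_j + H₁, λ̄_j + H₃}`. -/
theorem dual_bounding_part_two
    (n m : ℕ) (F : EuclideanSpace ℝ (Fin n) → ℝ) (L μ : ℝ) (hL : 0 < L) (hμ : 0 < μ)
    (hF : Differentiable ℝ F)
    (hlip : ∀ x y : EuclideanSpace ℝ (Fin n),
      ‖gradient F x - gradient F y‖ ≤ L * ‖x - y‖)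
    (b0 rlow rup qlow q qup : EuclideanSpace ℝ (Fin n))
    (A : Matrix (Fin m) (Fin n) ℝ) (j : Fin m) (haj : rowVec A j ≠ 0)
    (lamlow lam lamup : Fin m → ℝ)
    (hstatlow : μ • (qlow - rlow) + gradient F rlow + b0 + transMul A lamlow = 0)
    (hstat : gradient F q + b0 + transMul A lam = 0)
    (hstatup : L • (qup - rup) + gradient F rup + b0 + transMul A lamup = 0)
    (hcs : ∀ l, l ≠ j → lamlow l = 0 ∧ lam l = 0 ∧ lamup l = 0)
    (hlamj : 0 ≤ lam j)
    (hqlow : qlow = q) (hqup : qup = q)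
    (η H1 H3 : ℝ)
    (hη : η = 1 / ‖rowVec A j‖ ^ 2)
    (hH1 : H1 = Real.sqrt η * ((L + μ) * (‖q‖ + ‖rlow‖)))
    (hH3 : H3 = 2 * Real.sqrt η * (L * (‖q‖ + ‖rup‖))) :
    |lamlow j - lam j| ≤ H1 ∧ |lamup j - lam j| ≤ H3 ∧
      max (max (lamlow j - H1) (lamup j - H3)) 0 ≤ lam j ∧
      lam j ≤ min (lamlow j + H1) (lamup j + H3) := by
  set a := rowVec A j with ha
  have hapos : (0:ℝ) < ‖a‖ := norm_pos_iff.mpr haj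
  have hsq : Real.sqrt η = ‖a‖⁻¹ := by
    rw [hη, one_div, Real.sqrt_inv, Real.sqrt_sq hapos.le]
  have tlow : transMul A lamlow = lamlow j • a :=
    transMul_single A lamlow j (fun l hl => (hcs l hl).1)
  have tmid : transMul A lam = lam j • a :=
    transMul_single A lam j (fun l hl => (hcs l hl).2.1)
  have tup : transMul A lamup = lamup j • a :=
    transMul_single A lamup j (fun l hl => (hcs l hl).2.2)
  rw [tlow, hqlow] at hstatlow
  rw [tmid] at hstat
  rw [tup, hqup] at hstatup
  have e1 : (lamlow j - lam j) • a =
      (gradient F q - gradient F rlow) - μ • (q - rlow) := by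
    have h := sub_eq_zero.mpr (hstatlow.trans hstat.symm)
    rw [sub_smul]
    linear_combination (norm := module) h
  have e3 : (lamup j - lam j) • a =
      (gradient F q - gradient F rup) - L • (q - rup) := by
    have h := sub_eq_zero.mpr (hstatup.trans hstat.symm)
    rw [sub_smul]
    linear_combination (norm := module) h
  have b1 : |lamlow j - lam j| * ‖a‖ ≤ (L + μ) * (‖q‖ + ‖rlow‖) := by
    have := congrArg norm e1
    rw [norm_smul, Real.norm_eq_abs] at this
    rw [this]
    calc ‖(gradient F q - gradient F rlow) - μ • (q - rlow)‖
        ≤ ‖gradient F q - gradient F rlow‖ + ‖μ • (q - rlow)‖ := norm_sub_le _ _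
      _ ≤ L * ‖q - rlow‖ + μ * ‖q - rlow‖ := by
          rw [norm_smul, Real.norm_eq_abs, abs_of_pos hμ]
          have := hlip q rlow
          linarith
      _ = (L + μ) * ‖q - rlow‖ := by ring
      _ ≤ (L + μ) * (‖q‖ + ‖rlow‖) := by
          have := norm_sub_le q rlow
          nlinarith
  have b3 : |lamup j - lam j| * ‖a‖ ≤ 2 * L * (‖q‖ + ‖rup‖) := by
    have := congrArg norm e3
    rw [norm_smul, Real.norm_eq_abs] at this
    rw [this]
    calc ‖(gradient F q - gradient F rup) - L • (q - rup)‖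
        ≤ ‖gradient F q - gradient F rup‖ + ‖L • (q - rup)‖ := norm_sub_le _ _
      _ ≤ L * ‖q - rup‖ + L * ‖q - rup‖ := by
          rw [norm_smul, Real.norm_eq_abs, abs_of_pos hL]
          have := hlip q rup
          linarith
      _ = 2 * L * ‖q - rup‖ := by ring
      _ ≤ 2 * L * (‖q‖ + ‖rup‖) := by
          have := norm_sub_le q rup
          nlinarith
  have hB1 : |lamlow j - lam j| ≤ H1 := by
    rw [hH1, hsq]
    rw [inv_mul_eq_div, le_div_iff₀ hapos] at *
    linarith [b1]
  have hB3 : |lamup j - lam j| ≤ H3 := by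
    rw [hH3, hsq]
    have : 2 * ‖a‖⁻¹ * (L * (‖q‖ + ‖rup‖)) = (2 * L * (‖q‖ + ‖rup‖)) / ‖a‖ := by
      field_simp
    rw [this, le_div_iff₀ hapos]
    linarith [b3]
  refine ⟨hB1, hB3, ?_, ?_⟩
  · have h1 := abs_le.mp hB1
    have h3 := abs_le.mp hB3
    simp only [max_le_iff]
    constructor
    · constructor <;> linarith [h1.2, h3.2]
    · exact hlamj
  · have h1 := abs_le.mp hB1
    have h3 := abs_le.mp hB3
    simp only [le_min_iff]
    constructor <;> linarith [h1.1, h3.1]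
end

section
/- Corollary 1 (dual bounds with anchors at zero): let F : ℝ^n → ℝ be differentiable with L-Lipschitz continuous gradient, μ > 0, b₀ ∈ ℝ^n, A ∈ ℝ^{m×n} with nonzero j-th row a_j, h ∈ ℝ^m, and set η = 1/‖a_j‖². Suppose (q̲, λ̲), (q, λ), (q̄, λ̄) satisfy μ q̲ + ∇F(0) + b₀ + Aᵀλ̲ = 0, ∇F(q) + b₀ + Aᵀλ = 0, and L q̄ + ∇F(0) + b₀ + Aᵀλ̄ = 0, with λ̲_l = λ_l = λ̄_l = 0 for every l ≠ j, λ̲_j ≥ 0, λ_j ≥ 0, λ̄_j ≥ 0, and tightness ⟨a_j, q̲⟩ = h_j and ⟨a_j, q̄⟩ = h_j. Then λ_j ≥ max{ η[⟨a_j, −∇F(0) − b₀⟩ − μ h_j]^+ − √η(μ‖q̲‖ + L‖q‖), η[⟨a_j, −∇F(0) − b₀⟩ − L h_j]^+ − √η L(‖q̄‖ + ‖q‖), 0 } and λ_j ≤ min{ η[⟨a_j, −∇F(0) − b₀⟩ − μ h_j]^+ + √η(μ‖q̲‖ + L‖q‖), η[⟨a_j, −∇F(0) − b₀⟩ − L h_j]^+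 + √η L(‖q̄‖ + ‖q‖) }. -/
open scoped RealInnerProductSpace

/-- Corollary 1 (dual bounds with anchors at zero): with the stationarity conditions
(anchored at `r = 0`) of the lower model, original, and upper model problems, vanishing of
all multiplier components except the `j`-th, nonnegativity of the `j`-th multipliers, and
tightness `⟨a_j, q̲⟩ = h_j`, `⟨a_j, q̄⟩ = h_j`, the shadow price `λ_j` of the original
problem satisfies the stated explicit lower and upper bounds. -/
theorem dual_bounds_anchor_zero
    (n m : ℕ) (F : EuclideanSpace ℝ (Fin n) → ℝ) (L μ : ℝ) (hL : 0 < L) (hμ : 0 < μ)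
    (hF : Differentiable ℝ F)
    (hlip : ∀ x y : EuclideanSpace ℝ (Fin n),
      ‖gradient F x - gradient F y‖ ≤ L * ‖x - y‖)
    (b0 qlow q qup : EuclideanSpace ℝ (Fin n))
    (A : Matrix (Fin m) (Fin n) ℝ) (j : Fin m) (haj : rowVec A j ≠ 0)
    (h : Fin m → ℝ) (lamlow lam lamup : Fin m → ℝ)
    (hstatlow : μ • qlow + gradient F 0 + b0 + transMul A lamlow = 0)
    (hstat : gradient F q + b0 + transMul A lam = 0)
    (hstatup : L • qup + gradient F 0 + b0 + transMul A lamup = 0)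
    (hcs : ∀ l, l ≠ j → lamlow l = 0 ∧ lam l = 0 ∧ lamup l = 0)
    (hlamlowj : 0 ≤ lamlow j) (hlamj : 0 ≤ lam j) (hlamupj : 0 ≤ lamup j)
    (htightlow : ⟪rowVec A j, qlow⟫ = h j)
    (htightup : ⟪rowVec A j, qup⟫ = h j)
    (η : ℝ) (hη : η = 1 / ‖rowVec A j‖ ^ 2) :
    max (max
        (η * max (⟪rowVec A j, -gradient F 0 - b0⟫ - μ * h j) 0 -
          Real.sqrt η * (μ * ‖qlow‖ + L * ‖q‖))
        (η * max (⟪rowVec A j, -gradient F 0 - b0⟫ - L * h j) 0 -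
          Real.sqrt η * (L * (‖qup‖ + ‖q‖)))) 0 ≤ lam j ∧
      lam j ≤ min
        (η * max (⟪rowVec A j, -gradient F 0 - b0⟫ - μ * h j) 0 +
          Real.sqrt η * (μ * ‖qlow‖ + L * ‖q‖))
        (η * max (⟪rowVec A j, -gradient F 0 - b0⟫ - L * h j) 0 +
          Real.sqrt η * (L * (‖qup‖ + ‖q‖))) := by
  set a := rowVec A j with ha_def
  have hna : (0:ℝ) < ‖a‖ := norm_pos_iff.mpr haj
  have hη' : 0 < η := by rw [hη]; positivity
  have hsqrtη : Real.sqrt η = 1 / ‖a‖ := by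
    rw [hη, one_div, Real.sqrt_inv, Real.sqrt_sq hna.le, one_div]
  have hTM : ∀ (v : Fin m → ℝ), (∀ l, l ≠ j → v l = 0) → transMul A v = v j • a := by
    intro v hv
    ext i
    simp only [transMul, PiLp.smul_apply, smul_eq_mul, ha_def, rowVec, PiLp.toLp_apply]
    exact Finset.sum_eq_single j (fun l _ hl => by rw [hv l hl, zero_mul])
      (fun hj => absurd (Finset.mem_univ j) hj)
  have h1 : μ • qlow + gradient F 0 + b0 + lamlow j • a = 0 := by
    rw [← hTM lamlow (fun l hl => (hcs l hl).1)]; exact hstatlow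
  have h2 : gradient F q + b0 + lam j • a = 0 := by
    rw [← hTM lam (fun l hl => (hcs l hl).2.1)]; exact hstat
  have h3 : L • qup + gradient F 0 + b0 + lamup j • a = 0 := by
    rw [← hTM lamup (fun l hl => (hcs l hl).2.2)]; exact hstatup
  set g0 := gradient F 0 with hg0
  set gq := gradient F q with hgq
  have hasq : ⟪a, a⟫ = ‖a‖ ^ 2 := real_inner_self_eq_norm_sq a
  -- value of lamlow j
  have hlow_val : lamlow j = η * (⟪a, -g0 - b0⟫ - μ * h j) := by
    have hip := congrArg (fun x => ⟪a, x⟫) h1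
    simp only [inner_add_right, inner_smul_right, real_inner_self_eq_norm_sq,
      inner_zero_right, htightlow] at hip
    have hna2 : ‖a‖ ^ 2 ≠ 0 := by positivity
    rw [hη, inner_sub_right, inner_neg_right, one_div, inv_mul_eq_div, eq_div_iff hna2]
    linarith [hip]
  have hup_val : lamup j = η * (⟪a, -g0 - b0⟫ - L * h j) := by
    have hip := congrArg (fun x => ⟪a, x⟫) h3
    simp only [inner_add_right, inner_smul_right, real_inner_self_eq_norm_sq,
      inner_zero_right, htightup] at hip
    have hna2 : ‖a‖ ^ 2 ≠ 0 := by positivity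
    rw [hη, inner_sub_right, inner_neg_right, one_div, inv_mul_eq_div, eq_div_iff hna2]
    linarith [hip]
  have hlow_plus : lamlow j = η * max (⟪a, -g0 - b0⟫ - μ * h j) 0 := by
    have hnn : 0 ≤ ⟪a, -g0 - b0⟫ - μ * h j := by
      by_contra hX
      push_neg at hX
      have := mul_neg_of_pos_of_neg hη' hX
      linarith [hlow_val, hlamlowj]
    rw [max_eq_left hnn]; exact hlow_val
  have hup_plus : lamup j = η * max (⟪a, -g0 - b0⟫ - L * h j) 0 := by
    have hnn : 0 ≤ ⟪a, -g0 - b0⟫ - L * h j := by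
      by_contra hX
      push_neg at hX
      have := mul_neg_of_pos_of_neg hη' hX
      linarith [hup_val, hlamupj]
    rw [max_eq_left hnn]; exact hup_val
  -- gradient Lipschitz bound
  have hgrad : ‖g0 - gq‖ ≤ L * ‖q‖ := by
    have hl := hlip 0 q
    have h0q : ‖(0 : EuclideanSpace ℝ (Fin n)) - q‖ = ‖q‖ := by rw [zero_sub, norm_neg]
    rw [h0q] at hl
    exact hl
  -- difference bound lower
  have hdiff1 : (lam j - lamlow j) • a = μ • qlow + g0 - gq := by
    have e1 : lam j • a = -(gq + b0) := by
      have := h2; rw [add_eq_zero_iff_eq_neg] at this; linear_combination (norm := abel) this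
    have e2 : lamlow j • a = -(μ • qlow + g0 + b0) := by
      have := h1; rw [add_eq_zero_iff_eq_neg] at this; linear_combination (norm := abel) this
    rw [sub_smul, e1, e2]; abel
  have habs1 : |lam j - lamlow j| ≤ Real.sqrt η * (μ * ‖qlow‖ + L * ‖q‖) := by
    have hn : |lam j - lamlow j| * ‖a‖ ≤ μ * ‖qlow‖ + L * ‖q‖ := by
      have := congrArg norm hdiff1
      rw [norm_smul, Real.norm_eq_abs] at this
      rw [this]
      calc ‖μ • qlow + g0 - gq‖ ≤ ‖μ • qlow‖ + ‖g0 - gq‖ := by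
            rw [add_sub_assoc]; exact norm_add_le _ _
        _ ≤ μ * ‖qlow‖ + L * ‖q‖ := by
            rw [norm_smul, Real.norm_eq_abs, abs_of_pos hμ]
            linarith [hgrad]
    rw [hsqrtη]
    rw [div_mul_eq_mul_div, le_div_iff₀ hna, one_mul]
    linarith [hn]
  have hdiff3 : (lam j - lamup j) • a = L • qup + g0 - gq := by
    have e1 : lam j • a = -(gq + b0) := by
      have := h2; rw [add_eq_zero_iff_eq_neg] at this; linear_combination (norm := abel) this
    have e2 : lamup j • a = -(L • qup + g0 + b0) := by
      have := h3; rw [add_eq_zero_iff_eq_neg] at this; linear_combination (norm := abel) this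
    rw [sub_smul, e1, e2]; abel
  have habs3 : |lam j - lamup j| ≤ Real.sqrt η * (L * (‖qup‖ + ‖q‖)) := by
    have hn : |lam j - lamup j| * ‖a‖ ≤ L * (‖qup‖ + ‖q‖) := by
      have := congrArg norm hdiff3
      rw [norm_smul, Real.norm_eq_abs] at this
      rw [this]
      calc ‖L • qup + g0 - gq‖ ≤ ‖L • qup‖ + ‖g0 - gq‖ := by
            rw [add_sub_assoc]; exact norm_add_le _ _
        _ ≤ L * (‖qup‖ + ‖q‖) := by
            rw [norm_smul, Real.norm_eq_abs, abs_of_pos hL]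
            nlinarith [hgrad]
    rw [hsqrtη]
    rw [div_mul_eq_mul_div, le_div_iff₀ hna, one_mul]
    linarith [hn]
  rw [abs_le] at habs1 habs3
  refine ⟨max_le (max_le ?_ ?_) hlamj, le_min ?_ ?_⟩
  · linarith [habs1.2, hlow_plus.ge, hlow_plus.le]
  · linarith [habs3.2, hup_plus.ge]
  · linarith [habs1.1, hlow_plus.ge]
  · linarith [habs3.1, hup_plus.ge]
end

section
/- Key step of Corollary 2 (equal model multipliers and scaled minimizers when the resource capacity is zero): let F : ℝ^n → ℝ be differentiable, μ, L > 0, b₀ ∈ ℝ^n, and A ∈ ℝ^{m×n} with nonzero j-th row a_j. Suppose (q̲, λ̲) and (q̄, λ̄) satisfy μ q̲ + ∇F(0) + b₀ + Aᵀλ̲ = 0 and L q̄ + ∇F(0) + b₀ + Aᵀλ̄ = 0, with λ̲_l = λ̄_l = 0 for every l ≠ j, λ̲_j ≥ 0, λ̄_j ≥ 0, and tightness with zero right-hand side: ⟨a_j, q̲⟩ = 0 and ⟨a_j, q̄⟩ = 0. Then λ̲ = λ̄ and μ q̲ = L q̄; in particular μ‖q̲‖ = L‖q̄‖. -/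
open scoped RealInnerProductSpace

/-- Key step of Corollary 2 (equal model multipliers and scaled minimizers when the
resource capacity is zero): with the stationarity conditions, anchored at `0`, of the
lower and upper model problems, vanishing of multiplier components other than the `j`-th,
nonnegativity of the `j`-th multipliers, and tightness with zero right-hand side,
one gets `λ̲ = λ̄`, `μ q̲ = L q̄`, and in particular `μ‖q̲‖ = L‖q̄‖`. -/
theorem corollary_two_key_step
    (n m : ℕ) (F : EuclideanSpace ℝ (Fin n) → ℝ) (hF : Differentiable ℝ F)
    (μ L : ℝ) (hμ : 0 < μ) (hL : 0 < L)
    (b0 qlow qup : EuclideanSpace ℝ (Fin n))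
    (A : Matrix (Fin m) (Fin n) ℝ) (j : Fin m) (haj : rowVec A j ≠ 0)
    (lamlow lamup : Fin m → ℝ)
    (hstatlow : μ • qlow + gradient F 0 + b0 + transMul A lamlow = 0)
    (hstatup : L • qup + gradient F 0 + b0 + transMul A lamup = 0)
    (hcs : ∀ l, l ≠ j → lamlow l = 0 ∧ lamup l = 0)
    (hlamlowj : 0 ≤ lamlow j) (hlamupj : 0 ≤ lamup j)
    (htightlow : ⟪rowVec A j, qlow⟫ = 0)
    (htightup : ⟪rowVec A j, qup⟫ = 0) :
    lamlow = lamup ∧ μ • qlow = L • qup ∧ μ * ‖qlow‖ = L * ‖qup‖ := by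
  set a := rowVec A j
  set g := gradient F 0 + b0
  have hTlow : transMul A lamlow = lamlow j • a :=
    transMul_single A lamlow j (fun l hl => (hcs l hl).1)
  have hTup : transMul A lamup = lamup j • a :=
    transMul_single A lamup j (fun l hl => (hcs l hl).2)
  have hlow : μ • qlow + g + lamlow j • a = 0 := by
    rw [← hTlow]; simpa [g, add_assoc] using hstatlow
  have hup : L • qup + g + lamup j • a = 0 := by
    rw [← hTup]; simpa [g, add_assoc] using hstatup
  have ha2 : (0:ℝ) < ⟪a, a⟫ := by
    rw [real_inner_self_eq_norm_sq]
    have : 0 < ‖a‖ := norm_pos_iff.2 haj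
    positivity
  -- take inner product with a
  have hilow : ⟪a, g⟫ + lamlow j * ⟪a, a⟫ = 0 := by
    have := congrArg (fun v => ⟪a, v⟫) hlow
    simpa [inner_add_right, inner_smul_right, htightlow, mul_comm] using this
  have hiup : ⟪a, g⟫ + lamup j * ⟪a, a⟫ = 0 := by
    have := congrArg (fun v => ⟪a, v⟫) hup
    simpa [inner_add_right, inner_smul_right, htightup, mul_comm] using this
  have hj : lamlow j = lamup j := by
    have : lamlow j * ⟪a, a⟫ = lamup j * ⟪a, a⟫ := by linarith
    exact mul_right_cancel₀ (ne_of_gt ha2) this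
  have hlam : lamlow = lamup := by
    funext l
    by_cases hl : l = j
    · rw [hl]; exact hj
    · rw [(hcs l hl).1, (hcs l hl).2]
  have hq : μ • qlow = L • qup := by
    have h1 : μ • qlow = -(g + lamlow j • a) := by
      rw [add_assoc] at hlow; exact eq_neg_of_add_eq_zero_left hlow
    have h2 : L • qup = -(g + lamup j • a) := by
      rw [add_assoc] at hup; exact eq_neg_of_add_eq_zero_left hup
    rw [h1, h2, hj]
  refine ⟨hlam, hq, ?_⟩
  · exact (by
    have := congrArg norm hq
    rwa [norm_smul, norm_smul, Real.norm_eq_abs, Real.norm_eq_abs,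
      abs_of_pos hμ, abs_of_pos hL] at this)
end
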